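/- arXiv:math/0608787 — 2 statements merged into one kernel-verified Lean document; each statement's English description precedes it below -/
import Mathlib

section
/- For all x in [0,1], 6(sqrt(1+x) - sqrt(1-x))/(4 + sqrt(1+x) + sqrt(1-x)) ≤ arcsin(x). -/
open Real

lemma key_deriv_pos {t : ℝ} (h0 : 0 < t) (h1 : t < Real.pi/2) :
    0 < 2 - 2 * Real.cos t - t * Real.sin t := by
  have hs0 : 0 < t/2 := by linarith
  have hs1 : t/2 < Real.pi/2 := by linarith
  have htan := Real.lt_tan hs0 hs1
  have hcos : 0 < Real.cos (t/2) := Real.cos_pos_of_mem_Ioo ⟨by linarith [Real.pi_pos], hs1⟩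
  rw [Real.tan_eq_sin_div_cos, lt_div_iff₀ hcos] at htan
  have hsin : 0 < Real.sin (t/2) := Real.sin_pos_of_pos_of_lt_pi hs0 (by linarith [Real.pi_pos])
  have hcost : Real.cos t = 1 - 2 * Real.sin (t/2)^2 := by
    have h1 : Real.cos t = Real.cos (2 * (t/2)) := by ring_nf
    have h2 : Real.sin (t/2)^2 + Real.cos (t/2)^2 = 1 := Real.sin_sq_add_cos_sq _
    rw [h1, Real.cos_two_mul]; nlinarith
  have hsint : Real.sin t = 2 * Real.sin (t/2) * Real.cos (t/2) := by
    rw [← Real.sin_two_mul]; ring_nf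
  rw [hcost, hsint]
  nlinarith

lemma key : ∀ t ∈ Set.Icc (0:ℝ) (Real.pi/4), 3 * Real.sin t ≤ t * (2 + Real.cos t) := by
  have hmono : StrictMonoOn (fun t => t * (2 + Real.cos t) - 3 * Real.sin t)
      (Set.Icc 0 (Real.pi/4)) := by
    apply strictMonoOn_of_deriv_pos (convex_Icc _ _)
    · exact (Continuous.sub (continuous_id.mul (by continuity)) (by continuity)).continuousOn
    · intro t ht
      rw [interior_Icc] at ht
      have hd : HasDerivAt (fun t => t * (2 + Real.cos t) - 3 * Real.sin t)
          (1 * (2 + Real.cos t) + t * (-Real.sin t) - 3 * Real.cos t) t := by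
        have := ((hasDerivAt_id t).mul ((hasDerivAt_const t (2:ℝ)).add (Real.hasDerivAt_cos t))).sub
          ((Real.hasDerivAt_sin t).const_mul 3)
        exact this.congr_deriv (by simp only [Pi.add_apply, id]; ring)
      rw [hd.deriv]
      have := key_deriv_pos ht.1 (lt_trans ht.2 (by linarith [Real.pi_pos]))
      linarith
  intro t ht
  rcases eq_or_lt_of_le ht.1 with h | h
  · simp [← h]
  · have := hmono (Set.left_mem_Icc.mpr (by linarith [Real.pi_pos])) ht h
    simp at this
    linarith

theorem stmt_2 : ∀ x ∈ Set.Icc (0:ℝ) 1,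
    6 * (Real.sqrt (1 + x) - Real.sqrt (1 - x)) /
      (4 + Real.sqrt (1 + x) + Real.sqrt (1 - x)) ≤ Real.arcsin x := by
  intro x hx
  obtain ⟨hx0, hx1⟩ := hx
  set θ := Real.arcsin x with hθ
  have hθ0 : 0 ≤ θ := Real.arcsin_nonneg.mpr hx0
  have hθ2 : θ ≤ Real.pi/2 := Real.arcsin_le_pi_div_two x
  have hxs : Real.sin θ = x := Real.sin_arcsin (by linarith) hx1
  set t := θ/2 with htdef
  have ht0 : 0 ≤ t := by positivity
  have ht4 : t ≤ Real.pi/4 := by simp only [htdef]; linarith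
  have hsin : 0 ≤ Real.sin t := Real.sin_nonneg_of_nonneg_of_le_pi ht0 (by linarith [Real.pi_pos])
  have hcos : 0 ≤ Real.cos t := Real.cos_nonneg_of_mem_Icc ⟨by linarith [Real.pi_pos], by linarith [Real.pi_pos]⟩
  have hsc : Real.sin t ≤ Real.cos t := by
    rw [← Real.sin_pi_div_two_sub]
    apply Real.sin_le_sin_of_le_of_le_pi_div_two (by linarith [Real.pi_pos]) (by linarith) (by linarith)
  have hpyth : Real.sin t^2 + Real.cos t^2 = 1 := Real.sin_sq_add_cos_sq t
  have hsin2 : Real.sin θ = 2 * Real.sin t * Real.cos t := by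
    rw [← Real.sin_two_mul]; congr 1; rw [htdef]; ring
  have h1p : Real.sqrt (1 + x) = Real.cos t + Real.sin t := by
    rw [← hxs, hsin2]
    have : 1 + 2 * Real.sin t * Real.cos t = (Real.cos t + Real.sin t)^2 := by nlinarith
    rw [this, Real.sqrt_sq (by linarith)]
  have h1m : Real.sqrt (1 - x) = Real.cos t - Real.sin t := by
    rw [← hxs, hsin2]
    have : 1 - 2 * Real.sin t * Real.cos t = (Real.cos t - Real.sin t)^2 := by nlinarith
    rw [this, Real.sqrt_sq (by linarith)]
  rw [h1p, h1m]
  have hkey := key t ⟨ht0, ht4⟩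
  have hden : 0 < 4 + (Real.cos t + Real.sin t) + (Real.cos t - Real.sin t) := by linarith
  rw [div_le_iff₀ hden]
  have hθt : θ = 2 * t := by rw [htdef]; ring
  rw [hθt]
  nlinarith
end

section
/- For all x in (0,1), arcsin(x) < (π(2-√2)/(π-2√2))·(sqrt(1+x) - sqrt(1-x)) / (√2(4-π)/(π-2√2) + sqrt(1+x) + sqrt(1-x)) < (π/(π-2))·x / (2/(π-2) + sqrt(1-x^2)). -/
open Real Set

noncomputable def aa : ℝ := Real.sqrt 2 * (4 - π)
noncomputable def bb : ℝ := 2 * (π - 2 * Real.sqrt 2)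
noncomputable def cc : ℝ := π * (2 - Real.sqrt 2)

lemma hs2sq : Real.sqrt 2 ^ 2 = 2 := Real.sq_sqrt (by norm_num)

lemma s2_lb : (1.414213 : ℝ) < Real.sqrt 2 := by
  nlinarith [hs2sq, Real.sqrt_nonneg 2]

lemma s2_ub : Real.sqrt 2 < 1.414214 := by
  nlinarith [hs2sq, Real.sqrt_nonneg 2]

lemma aa_pos : 0 < aa := by
  have := pi_lt_d6; have := s2_lb
  unfold aa; nlinarith

lemma bb_pos : 0 < bb := by
  have := pi_gt_d6; have := s2_ub
  unfold bb; nlinarith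

lemma cc_pos : 0 < cc := by
  have := pi_gt_d6; have := s2_ub; have := pi_lt_d6
  unfold cc; nlinarith

lemma habc : aa + bb = cc := by unfold aa bb cc; ring

lemma a_lt_4b : aa < 4 * bb := by
  have := pi_gt_d6; have := pi_lt_d6; have := s2_lb; have := s2_ub
  unfold aa bb; nlinarith

noncomputable def psi (t : ℝ) : ℝ := bb * t * Real.cos (t/2) - aa * Real.sin (t/2)
noncomputable def psi1 (t : ℝ) : ℝ :=
  (bb - aa/2) * Real.cos (t/2) - bb/2 * t * Real.sin (t/2)
noncomputable def psi2 (t : ℝ) : ℝ :=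
  (aa/4 - bb) * Real.sin (t/2) - bb/4 * t * Real.cos (t/2)

lemma hasDeriv_half_cos (t : ℝ) :
    HasDerivAt (fun s : ℝ => Real.cos (s/2)) (-Real.sin (t/2) / 2) t := by
  have h := (Real.hasDerivAt_cos (t/2)).comp t ((hasDerivAt_id t).div_const 2)
  simpa [Function.comp_def, div_eq_mul_inv, mul_comm] using h

lemma hasDeriv_half_sin (t : ℝ) :
    HasDerivAt (fun s : ℝ => Real.sin (s/2)) (Real.cos (t/2) / 2) t := by
  have h := (Real.hasDerivAt_sin (t/2)).comp t ((hasDerivAt_id t).div_const 2)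
  simpa [Function.comp_def, div_eq_mul_inv, mul_comm] using h

lemma psi_hasDeriv (t : ℝ) : HasDerivAt psi (psi1 t) t := by
  have h1 : HasDerivAt (fun s : ℝ => bb * s * Real.cos (s/2))
      (bb * Real.cos (t/2) + bb * t * (-Real.sin (t/2) / 2)) t := by
    simpa [Pi.mul_def] using (((hasDerivAt_id t).const_mul bb).mul (hasDeriv_half_cos t))
  have h2 := (hasDeriv_half_sin t).const_mul aa
  have := h1.sub h2
  refine this.congr_deriv ?_
  unfold psi1; ring

lemma psi1_hasDeriv (t : ℝ) : HasDerivAt psi1 (psi2 t) t := by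
  have h1 := (hasDeriv_half_cos t).const_mul (bb - aa/2)
  have h2 : HasDerivAt (fun s : ℝ => bb/2 * s * Real.sin (s/2))
      (bb/2 * Real.sin (t/2) + bb/2 * t * (Real.cos (t/2) / 2)) t := by
    simpa [Pi.mul_def] using (((hasDerivAt_id t).const_mul (bb/2)).mul (hasDeriv_half_sin t))
  have := h1.sub h2
  refine this.congr_deriv ?_
  unfold psi2; ring

lemma psi2_neg : ∀ t ∈ Ioo (0:ℝ) (π/4), psi2 t < 0 := by
  intro t ht
  have hpi := pi_gt_three
  have hs : 0 < Real.sin (t/2) := by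
    apply Real.sin_pos_of_pos_of_lt_pi (by linarith [ht.1])
    linarith [ht.2, pi_pos]
  have hc : 0 < Real.cos (t/2) := by
    apply Real.cos_pos_of_mem_Ioo
    constructor <;> linarith [ht.1, ht.2, pi_pos]
  have h4 := a_lt_4b
  have hb := bb_pos
  unfold psi2
  nlinarith [mul_pos hs (show (0:ℝ) < 4*bb - aa by linarith),
    mul_pos (mul_pos hb ht.1) hc]

lemma psi_zero : psi 0 = 0 := by unfold psi; simp

lemma psi_pi4_neg : psi (π/4) < 0 := by
  unfold psi
  rw [show π/4/2 = π/8 by ring, Real.cos_pi_div_eight, Real.sin_pi_div_eight]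
  set c8 := Real.sqrt (2 + Real.sqrt 2) with hc8def
  set s8 := Real.sqrt (2 - Real.sqrt 2) with hs8def
  have hc8 : c8 ^ 2 = 2 + Real.sqrt 2 := Real.sq_sqrt (by nlinarith [s2_lb])
  have hs8 : s8 ^ 2 = 2 - Real.sqrt 2 := Real.sq_sqrt (by nlinarith [s2_ub])
  have hc8pos : 0 < c8 := Real.sqrt_pos.2 (by nlinarith [s2_lb])
  have hs8pos : 0 < s8 := Real.sqrt_pos.2 (by nlinarith [s2_ub])
  have hc8u : c8 < 1.84776 := by nlinarith [hc8, s2_ub, hc8pos]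
  have hs8l : (0.765366 : ℝ) < s8 := by nlinarith [hs8, s2_ub, hs8pos]
  have hpi1 := pi_gt_d6
  have hpi2 := pi_lt_d6
  have hs2l := s2_lb
  have hs2u := s2_ub
  have h1 : 2*(π - 2*Real.sqrt 2)*(π/4) < 0.492 := by nlinarith
  have hY : (1.2139 : ℝ) < Real.sqrt 2 * (4 - π) := by nlinarith
  have hbp := bb_pos
  unfold aa bb
  have hXpos : 0 < 2*(π - 2*Real.sqrt 2)*(π/4) := by unfold bb at hbp; nlinarith [pi_pos]
  nlinarith [mul_lt_mul_of_pos_right h1 hc8pos,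
    mul_lt_mul_of_pos_right hc8u (show (0:ℝ) < 0.492 by norm_num),
    mul_lt_mul_of_pos_right hY hs8pos,
    mul_lt_mul_of_pos_right hs8l (show (0:ℝ) < 1.2139 by norm_num)]

lemma psi_concave : StrictConcaveOn ℝ (Icc (0:ℝ) (π/4)) psi := by
  apply strictConcaveOn_of_deriv2_neg (convex_Icc _ _)
  · exact (Continuous.continuousOn (by unfold psi; fun_prop))
  · intro t ht
    rw [interior_Icc] at ht
    have h1 : deriv psi = psi1 := funext fun s => (psi_hasDeriv s).deriv
    have h2 : deriv (deriv psi) t = psi2 t := by rw [h1]; exact (psi1_hasDeriv t).deriv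
    simpa [Function.iterate_succ, h2] using psi2_neg t ht

lemma psi_pos_of_le {t s : ℝ} (ht : t ∈ Ioo (0:ℝ) (π/4)) (hpsit : 0 ≤ psi t)
    (hs : s ∈ Ioo (0:ℝ) t) : 0 < psi s := by
  have hcon := psi_concave
  have h0 : (0:ℝ) ∈ Icc (0:ℝ) (π/4) := ⟨le_refl _, by positivity⟩
  have htt : t ∈ Icc (0:ℝ) (π/4) := ⟨ht.1.le, ht.2.le⟩
  have hne : (0:ℝ) ≠ t := ne_of_lt ht.1
  have hw1 : 0 < 1 - s/t := by
    rw [sub_pos, div_lt_one ht.1]; exact hs.2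
  have hw2 : 0 < s/t := div_pos hs.1 ht.1
  have := hcon.2 h0 htt hne hw1 hw2 (by ring)
  simp only [smul_eq_mul, mul_zero, psi_zero, zero_add] at this
  have he : s/t * t = s := div_mul_cancel₀ s (ne_of_gt ht.1)
  rw [he] at this
  nlinarith [this, mul_nonneg hw2.le hpsit]

lemma psi_neg_of_ge {t s : ℝ} (ht : t ∈ Ioo (0:ℝ) (π/4)) (hpsit : psi t < 0)
    (hs : s ∈ Ioo t (π/4)) : psi s < 0 := by
  by_contra h
  push_neg at h
  exact absurd (psi_pos_of_le ⟨lt_trans ht.1 hs.1, hs.2⟩ h ⟨ht.1, hs.1⟩) (by linarith)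

noncomputable def ff (t : ℝ) : ℝ := cc * Real.sin t - t * (aa + bb * Real.cos t)

lemma ff_hasDeriv (t : ℝ) : HasDerivAt ff (2 * Real.sin (t/2) * psi t) t := by
  have h1 : HasDerivAt ff (cc * Real.cos t - (aa + bb * Real.cos t)
      - t * (bb * (-Real.sin t))) t := by
    have ha : HasDerivAt (fun s : ℝ => cc * Real.sin s) (cc * Real.cos t) t :=
      (Real.hasDerivAt_sin t).const_mul cc
    have hb : HasDerivAt (fun s : ℝ => s * (aa + bb * Real.cos s))
        (1 * (aa + bb * Real.cos t) + t * (bb * (-Real.sin t))) t :=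
      (hasDerivAt_id t).mul (((Real.hasDerivAt_cos t).const_mul bb).const_add aa)
    have := ha.sub hb
    exact this.congr_deriv (by ring)
  convert h1 using 1
  have hcos : Real.cos t = 1 - 2 * Real.sin (t/2) ^ 2 := by
    have h := Real.cos_two_mul (t/2)
    rw [show 2 * (t/2) = t by ring] at h
    nlinarith [Real.sin_sq_add_cos_sq (t/2)]
  have hsin : Real.sin t = 2 * Real.sin (t/2) * Real.cos (t/2) := by
    have h := Real.sin_two_mul (t/2)
    rw [show 2 * (t/2) = t by ring] at h
    linarith
  have hc : cc = aa + bb := habc.symm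
  unfold psi
  rw [hcos, hsin, hc]
  ring

lemma ff_zero : ff 0 = 0 := by unfold ff; simp

lemma ff_pi4 : ff (π/4) = 0 := by
  unfold ff cc aa bb
  rw [Real.sin_pi_div_four, Real.cos_pi_div_four]
  have h := hs2sq
  nlinarith [h]

lemma sin_half_pos {s : ℝ} (h1 : 0 < s) (h2 : s < π/4) : 0 < Real.sin (s/2) := by
  apply Real.sin_pos_of_pos_of_lt_pi (by linarith)
  linarith [pi_pos]

lemma ff_pos : ∀ t ∈ Ioo (0:ℝ) (π/4), 0 < ff t := by
  intro t ht
  have hffcont : Continuous ff := by unfold ff; fun_prop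
  rcases le_or_gt 0 (psi t) with hp | hp
  · -- psi t ≥ 0 : ff strictly increasing on [0, t]
    have hmono : StrictMonoOn ff (Icc 0 t) := by
      apply strictMonoOn_of_deriv_pos (convex_Icc _ _) hffcont.continuousOn
      intro s hs
      rw [interior_Icc] at hs
      rw [(ff_hasDeriv s).deriv]
      have hps : 0 < psi s := psi_pos_of_le ht hp hs
      have hsin : 0 < Real.sin (s/2) := sin_half_pos hs.1 (lt_trans hs.2 ht.2)
      positivity
    have := hmono (left_mem_Icc.2 ht.1.le) (right_mem_Icc.2 ht.1.le) ht.1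
    rwa [ff_zero] at this
  · -- psi t < 0 : ff strictly decreasing on [t, π/4]
    have hanti : StrictAntiOn ff (Icc t (π/4)) := by
      apply strictAntiOn_of_deriv_neg (convex_Icc _ _) hffcont.continuousOn
      intro s hs
      rw [interior_Icc] at hs
      rw [(ff_hasDeriv s).deriv]
      have hps : psi s < 0 := psi_neg_of_ge ht hp hs
      have hsin : 0 < Real.sin (s/2) := sin_half_pos (lt_trans ht.1 hs.1) hs.2
      nlinarith
    have := hanti (left_mem_Icc.2 ht.2.le) (right_mem_Icc.2 ht.2.le) ht.2
    rwa [ff_pi4] at this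

lemma key_s18 : ∀ t ∈ Ioo (0:ℝ) (π/4),
    t * (aa + bb * Real.cos t) < cc * Real.sin t := by
  intro t ht
  have := ff_pos t ht
  unfold ff at this
  linarith


lemma hK_lemma {s2 : ℝ} (hs2u : s2 < 1.414214) : 0 < π - 2*s2 := by
  nlinarith [pi_gt_d6]

lemma usq_lemma {s2 u : ℝ} (hs2 : s2^2 = 2) (hs2l : (1.414213:ℝ) < s2)
    (hu2 : s2/2 < u) : (0:ℝ) < 2*u^2 - 1 := by
  nlinarith [sq_nonneg (u - s2/2)]

lemma hq_lemma {s2 u : ℝ} (hs2 : s2^2 = 2) (hs2l : (1.414213:ℝ) < s2)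
    (hs2u : s2 < 1.414214) (hu2 : s2/2 < u) (hu1 : u < 1)
    (haa : (aa:ℝ) = s2*(4-π)) (hbb : (bb:ℝ) = 2*(π-2*s2)) (hcc : (cc:ℝ) = π*(2-s2)) :
    cc*(2+(π-2)*(2*u^2-1)) < π*u*(aa+bb*u) := by
  have hpi1 := pi_gt_d6
  have hpi2 := pi_lt_d6
  have hid : π*u*(aa+bb*u) - cc*(2+(π-2)*(2*u^2-1))
      = 2*π*(4-π)*(s2-1)*(u-s2/2)*(1-u) := by
    rw [haa, hbb, hcc]; linear_combination (π*(4-π)*(1-u))*hs2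
  have hpos : 0 < 2*π*(4-π)*(s2-1)*(u-s2/2)*(1-u) := by
    have h1 : (0:ℝ) < 2*π := by linarith
    have h2 : (0:ℝ) < 4-π := by linarith
    have h3 : (0:ℝ) < s2-1 := by linarith
    have h4 : (0:ℝ) < u-s2/2 := by linarith
    have h5 : (0:ℝ) < 1-u := by linarith
    positivity
  linarith [hid, hpos]

set_option maxHeartbeats 1000000 in
theorem stmt_18 : ∀ x ∈ Set.Ioo (0:ℝ) 1,
    Real.arcsin x <
      (Real.pi * (2 - Real.sqrt 2) / (Real.pi - 2 * Real.sqrt 2)) *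
        (Real.sqrt (1 + x) - Real.sqrt (1 - x)) /
      (Real.sqrt 2 * (4 - Real.pi) / (Real.pi - 2 * Real.sqrt 2) +
        Real.sqrt (1 + x) + Real.sqrt (1 - x)) ∧
    (Real.pi * (2 - Real.sqrt 2) / (Real.pi - 2 * Real.sqrt 2)) *
        (Real.sqrt (1 + x) - Real.sqrt (1 - x)) /
      (Real.sqrt 2 * (4 - Real.pi) / (Real.pi - 2 * Real.sqrt 2) +
        Real.sqrt (1 + x) + Real.sqrt (1 - x)) <
      (Real.pi / (Real.pi - 2)) * x / (2 / (Real.pi - 2) + Real.sqrt (1 - x ^ 2)) := by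
  intro x hx
  obtain ⟨hx0, hx1⟩ := hx
  have hpi1 := pi_gt_d6
  have hpi2 := pi_lt_d6
  obtain ⟨s2, hs2def⟩ : ∃ s2 : ℝ, s2 = Real.sqrt 2 := ⟨_, rfl⟩
  have hs2l : (1.414213:ℝ) < s2 := by rw [hs2def]; exact s2_lb
  have hs2u : s2 < 1.414214 := by rw [hs2def]; exact s2_ub
  have hs2 : s2^2 = 2 := by rw [hs2def]; exact hs2sq
  obtain ⟨θ, hθdef⟩ : ∃ θ : ℝ, θ = Real.arcsin x := ⟨_, rfl⟩
  have hθ1 : 0 < θ := hθdef ▸ Real.arcsin_pos.2 hx0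
  have hθ2 : θ < π/2 := hθdef ▸ Real.arcsin_lt_pi_div_two.2 hx1
  have hsinθ : Real.sin θ = x := by rw [hθdef]; exact Real.sin_arcsin (by linarith) hx1.le
  obtain ⟨t, htdef⟩ : ∃ t : ℝ, t = θ/2 := ⟨_, rfl⟩
  have ht1 : 0 < t := by rw [htdef]; positivity
  have ht2 : t < π/4 := by rw [htdef]; linarith
  have hθt : θ = 2*t := by rw [htdef]; ring
  obtain ⟨u, hudef⟩ : ∃ u : ℝ, u = Real.cos t := ⟨_, rfl⟩
  obtain ⟨v, hvdef⟩ : ∃ v : ℝ, v = Real.sin t := ⟨_, rfl⟩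
  have hv : 0 < v := by
    rw [hvdef]; exact Real.sin_pos_of_pos_of_lt_pi ht1 (by linarith [pi_pos])
  have hu1 : u < 1 := by
    rw [hudef]
    have := Real.strictAntiOn_cos (left_mem_Icc.2 pi_pos.le)
      ⟨ht1.le, by linarith [pi_pos]⟩ ht1
    simpa using this
  have hu2 : s2/2 < u := by
    rw [hudef, hs2def]
    have := Real.strictAntiOn_cos ⟨ht1.le, by linarith [pi_pos]⟩
      ⟨by positivity, by linarith [pi_pos]⟩ ht2
    rwa [Real.cos_pi_div_four] at this
  have hv2 : v < s2/2 := by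
    rw [hvdef, hs2def]
    have := Real.strictMonoOn_sin ⟨by linarith, by linarith⟩
      ⟨by linarith [pi_pos], by linarith [pi_pos]⟩ ht2
    rwa [Real.sin_pi_div_four] at this
  have huv : v^2 + u^2 = 1 := by
    rw [hudef, hvdef]; exact Real.sin_sq_add_cos_sq t
  have hsin2t : x = 2*v*u := by
    rw [hudef, hvdef, ← hsinθ, hθt, Real.sin_two_mul]
  have hcos2t : Real.cos θ = 2*u^2 - 1 := by
    rw [hudef, hθt, Real.cos_two_mul]
  have hsp : Real.sqrt (1+x) = u + v := by
    rw [show (1:ℝ)+x = (u+v)^2 by rw [hsin2t]; linear_combination -huv]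
    exact Real.sqrt_sq (by linarith)
  have hsm : Real.sqrt (1-x) = u - v := by
    rw [show (1:ℝ)-x = (u-v)^2 by rw [hsin2t]; linear_combination -huv]
    exact Real.sqrt_sq (by linarith)
  have hx2 : Real.sqrt (1-x^2) = 2*u^2 - 1 := by
    rw [show (1:ℝ)-x^2 = (Real.cos θ)^2 by
        linear_combination (-(1:ℝ)) * Real.sin_sq_add_cos_sq θ + (Real.sin θ + x) * hsinθ]
    rw [Real.sqrt_sq (Real.cos_nonneg_of_mem_Icc ⟨by linarith, hθ2.le⟩), hcos2t]
  have hK : (0:ℝ) < π - 2*s2 := hK_lemma hs2u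
  have hKne : (π - 2*s2) ≠ 0 := ne_of_gt hK
  have haa : aa = s2*(4-π) := by rw [hs2def]; rfl
  have hbb : bb = 2*(π-2*s2) := by rw [hs2def]; rfl
  have hcc : cc = π*(2-s2) := by rw [hs2def]; rfl
  have hccv : cc = aa + bb := habc.symm
  have haapos : (0:ℝ) < aa := aa_pos
  have hbbpos : (0:ℝ) < bb := bb_pos
  have hAB : 0 < aa + bb*u := by
    have hu0 : (0:ℝ) < u := by linarith
    nlinarith [haapos, hbbpos, mul_pos hbbpos hu0]
  have hABne : aa + bb*u ≠ 0 := ne_of_gt hAB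
  have hkey : t*(aa+bb*u) < cc*v := by
    rw [hudef, hvdef]; exact key_s18 t ⟨ht1, ht2⟩
  have hDen : s2*(4-π)/(π-2*s2) + (u+v) + (u-v) = (aa + bb*u)/(π-2*s2) := by
    rw [haa, hbb, add_assoc, div_add' _ _ _ hKne]; ring
  have hNum : π*(2-s2)/(π-2*s2) * ((u+v) - (u-v)) = (2*(cc*v))/(π-2*s2) := by
    rw [hcc]; field_simp; ring
  have hcancel : (2*(cc*v))/(π-2*s2) / ((aa+bb*u)/(π-2*s2)) = (2*(cc*v))/(aa+bb*u) := by
    rw [div_div_div_comm, div_self hKne, div_one]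
  rw [← hs2def, ← hθdef, hsp, hsm, hNum, hDen, hcancel]
  constructor
  · rw [lt_div_iff₀ hAB, hθt]
    calc 2*t*(aa+bb*u) = 2*(t*(aa+bb*u)) := by ring
    _ < 2*(cc*v) := by linarith
  · rw [hx2]
    have hP : (0:ℝ) < π - 2 := by linarith
    have hD2 : (0:ℝ) < 2/(π-2) + (2*u^2-1) := by
      have : (0:ℝ) < 2*u^2 - 1 := usq_lemma hs2 hs2l hu2
      positivity
    rw [div_lt_div_iff₀ hAB hD2]
    have hq : cc*(2+(π-2)*(2*u^2-1)) < π*u*(aa+bb*u) :=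
      hq_lemma hs2 hs2l hs2u hu2 hu1 haa hbb hcc
    calc 2*(cc*v) * (2/(π-2) + (2*u^2-1))
        = (2*v) * (cc*(2+(π-2)*(2*u^2-1))) / (π-2) := by field_simp
      _ < (2*v) * (π*u*(aa+bb*u)) / (π-2) := by
          exact (div_lt_div_iff_of_pos_right hP).2
            (mul_lt_mul_of_pos_left hq (by linarith : (0:ℝ) < 2*v))
      _ = π/(π-2)*x*(aa+bb*u) := by rw [hsin2t]; field_simp
end
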